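/- Let f ∈ ℂ[x,y,z] be homogeneous of degree d ≥ 1 not divisible by z, g(x,y) = f(x,y,1), and s an integer. Then the map φ_s : AR(f)_s → AR(g)_{≤s} induced by φ(a,b,c) = (θ(a) − x·θ(c), θ(b) − y·θ(c), d·θ(c)) is an isomorphism of ℂ-vector spaces, where AR(f)_s is the degree-s graded piece and AR(g)_{≤s} = {ρ' ∈ AR(g) : ρ' = 0 or sdeg(ρ') ≤ s}. -/

import Mathlib

open MvPolynomial

noncomputable section

/-- Dehomogenization `θ : ℂ[x,y,z] → ℂ[x,y]`, `u ↦ u(x,y,1)`. -/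
def theta (u : MvPolynomial (Fin 3) ℂ) : MvPolynomial (Fin 2) ℂ :=
  aeval ![X 0, X 1, 1] u

/-- The syzygy-degree `sdeg(α,β,γ) = max(deg(x·γ + d·α), deg(y·γ + d·β), deg γ)`. -/
def sdeg (d : ℕ)
    (ρ : MvPolynomial (Fin 2) ℂ × MvPolynomial (Fin 2) ℂ × MvPolynomial (Fin 2) ℂ) : ℕ :=
  max (totalDegree (X 0 * ρ.2.2 + (d : MvPolynomial (Fin 2) ℂ) * ρ.1))
    (max (totalDegree (X 1 * ρ.2.2 + (d : MvPolynomial (Fin 2) ℂ) * ρ.2.1))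
      (totalDegree ρ.2.2))

/-- `AR(f)_s`: the degree-`s` homogeneous piece of the graded module of Jacobian
syzygies of `f`, as a `ℂ`-vector subspace of `S³`. -/
def ARfs (f : MvPolynomial (Fin 3) ℂ) (s : ℕ) :
    Submodule ℂ (MvPolynomial (Fin 3) ℂ × MvPolynomial (Fin 3) ℂ × MvPolynomial (Fin 3) ℂ) where
  carrier := {ρ |
    ρ.1 * pderiv (0 : Fin 3) f + ρ.2.1 * pderiv (1 : Fin 3) f + ρ.2.2 * pderiv (2 : Fin 3) f = 0 ∧
    ρ.1.IsHomogeneous s ∧ ρ.2.1.IsHomogeneous s ∧ ρ.2.2.IsHomogeneous s}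
  add_mem' := by
    rintro a b ⟨ha, ha1, ha2, ha3⟩ ⟨hb, hb1, hb2, hb3⟩
    refine ⟨?_, ha1.add hb1, ha2.add hb2, ha3.add hb3⟩
    simp only [Prod.fst_add, Prod.snd_add]
    linear_combination ha + hb
  zero_mem' := by
    refine ⟨by simp, ?_, ?_, ?_⟩ <;> exact isHomogeneous_zero _ _ _
  smul_mem' := by
    rintro c a ⟨ha, ha1, ha2, ha3⟩
    refine ⟨?_, ?_, ?_, ?_⟩
    · simp only [Prod.smul_fst, Prod.smul_snd, smul_eq_C_mul]
      linear_combination C c * ha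
    · simpa [smul_eq_C_mul] using (isHomogeneous_C (Fin 3) c).mul ha1
    · simpa [smul_eq_C_mul] using (isHomogeneous_C (Fin 3) c).mul ha2
    · simpa [smul_eq_C_mul] using (isHomogeneous_C (Fin 3) c).mul ha3

/-- `AR(g)_{≤ s}`: syzygies of `g` which are zero or have syzygy-degree at most `s`,
as a `ℂ`-vector subspace of `R³`. -/
def ARgle (g : MvPolynomial (Fin 2) ℂ) (d s : ℕ) :
    Submodule ℂ (MvPolynomial (Fin 2) ℂ × MvPolynomial (Fin 2) ℂ × MvPolynomial (Fin 2) ℂ) where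
  carrier := {ρ |
    ρ.1 * pderiv (0 : Fin 2) g + ρ.2.1 * pderiv (1 : Fin 2) g + ρ.2.2 * g = 0 ∧
    (ρ = 0 ∨ sdeg d ρ ≤ s)}
  add_mem' := by
    rintro a b ⟨ha, hda⟩ ⟨hb, hdb⟩
    constructor
    · simp only [Prod.fst_add, Prod.snd_add]
      linear_combination ha + hb
    · rcases hda with h | h
      · rw [h, zero_add]; exact hdb
      rcases hdb with h' | h'
      · rw [h', add_zero]; exact Or.inr h
      right
      simp only [sdeg, Prod.fst_add, Prod.snd_add]
      have e1 : X 0 * (a.2.2 + b.2.2) + (d : MvPolynomial (Fin 2) ℂ) * (a.1 + b.1) =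
          (X 0 * a.2.2 + (d : MvPolynomial (Fin 2) ℂ) * a.1) +
          (X 0 * b.2.2 + (d : MvPolynomial (Fin 2) ℂ) * b.1) := by ring
      have e2 : X 1 * (a.2.2 + b.2.2) + (d : MvPolynomial (Fin 2) ℂ) * (a.2.1 + b.2.1) =
          (X 1 * a.2.2 + (d : MvPolynomial (Fin 2) ℂ) * a.2.1) +
          (X 1 * b.2.2 + (d : MvPolynomial (Fin 2) ℂ) * b.2.1) := by ring
      rw [e1, e2]
      have t1 := totalDegree_add (X 0 * a.2.2 + (d : MvPolynomial (Fin 2) ℂ) * a.1)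
        (X 0 * b.2.2 + (d : MvPolynomial (Fin 2) ℂ) * b.1)
      have t2 := totalDegree_add (X 1 * a.2.2 + (d : MvPolynomial (Fin 2) ℂ) * a.2.1)
        (X 1 * b.2.2 + (d : MvPolynomial (Fin 2) ℂ) * b.2.1)
      have t3 := totalDegree_add a.2.2 b.2.2
      simp only [sdeg] at h h'
      omega
  zero_mem' := by
    exact ⟨by simp, Or.inl rfl⟩
  smul_mem' := by
    rintro c a ⟨ha, hda⟩
    constructor
    · simp only [Prod.smul_fst, Prod.smul_snd, smul_eq_C_mul]
      linear_combination C c * ha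
    · rcases hda with h | h
      · left; rw [h, smul_zero]
      right
      simp only [sdeg, Prod.smul_fst, Prod.smul_snd]
      have e1 : X 0 * (c • a.2.2) + (d : MvPolynomial (Fin 2) ℂ) * (c • a.1) =
          c • (X 0 * a.2.2 + (d : MvPolynomial (Fin 2) ℂ) * a.1) := by
        simp only [smul_eq_C_mul]; ring
      have e2 : X 1 * (c • a.2.2) + (d : MvPolynomial (Fin 2) ℂ) * (c • a.2.1) =
          c • (X 1 * a.2.2 + (d : MvPolynomial (Fin 2) ℂ) * a.2.1) := by
        simp only [smul_eq_C_mul]; ring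
      rw [e1, e2]
      have t1 : (c • (X 0 * a.2.2 + (d : MvPolynomial (Fin 2) ℂ) * a.1)).totalDegree ≤
          (X 0 * a.2.2 + (d : MvPolynomial (Fin 2) ℂ) * a.1).totalDegree :=
        totalDegree_smul_le _ _
      have t2 : (c • (X 1 * a.2.2 + (d : MvPolynomial (Fin 2) ℂ) * a.2.1)).totalDegree ≤
          (X 1 * a.2.2 + (d : MvPolynomial (Fin 2) ℂ) * a.2.1).totalDegree :=
        totalDegree_smul_le _ _
      have t3 : (c • a.2.2).totalDegree ≤ a.2.2.totalDegree := totalDegree_smul_le _ _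
      simp only [sdeg] at h
      omega

def Gm (m : Fin 3 →₀ ℕ) : Fin 2 →₀ ℕ :=
  Finsupp.single 0 (m 0) + Finsupp.single 1 (m 1)

def Fm (s : ℕ) (m : Fin 2 →₀ ℕ) : Fin 3 →₀ ℕ :=
  Finsupp.single 0 (m 0) + Finsupp.single 1 (m 1) + Finsupp.single 2 (s - (m 0 + m 1))

@[simp] lemma Gm_apply0 (m : Fin 3 →₀ ℕ) : Gm m 0 = m 0 := by
  simp [Gm, Finsupp.single_apply]
@[simp] lemma Gm_apply1 (m : Fin 3 →₀ ℕ) : Gm m 1 = m 1 := by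
  simp [Gm, Finsupp.single_apply]
@[simp] lemma Fm_apply0 (s : ℕ) (m : Fin 2 →₀ ℕ) : Fm s m 0 = m 0 := by
  simp [Fm, Finsupp.single_apply]
@[simp] lemma Fm_apply1 (s : ℕ) (m : Fin 2 →₀ ℕ) : Fm s m 1 = m 1 := by
  simp [Fm, Finsupp.single_apply]
@[simp] lemma Fm_apply2 (s : ℕ) (m : Fin 2 →₀ ℕ) : Fm s m 2 = s - (m 0 + m 1) := by
  simp [Fm, Finsupp.single_apply]

lemma Gm_Fm (s : ℕ) (m : Fin 2 →₀ ℕ) : Gm (Fm s m) = m := by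
  ext i
  fin_cases i <;> simp

lemma theta_monomial (m : Fin 3 →₀ ℕ) (c : ℂ) :
    theta (monomial m c) = monomial (Gm m) c := by
  rw [theta, aeval_monomial, monomial_eq]
  rw [Finsupp.prod_fintype _ _ (fun i => pow_zero _),
    Finsupp.prod_fintype _ _ (fun i => pow_zero _)]
  simp [Fin.prod_univ_three, Fin.prod_univ_two, algebraMap_eq]

def Hs (s : ℕ) : MvPolynomial (Fin 2) ℂ →ₗ[ℂ] MvPolynomial (Fin 3) ℂ :=
  (Finsupp.lsum ℂ fun m => monomial (Fm s m)) ∘ₗ (AddMonoidAlgebra.coeffLinearEquiv ℂ).toLinearMap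

lemma Hs_monomial (s : ℕ) (m : Fin 2 →₀ ℕ) (c : ℂ) :
    Hs s (monomial m c) = monomial (Fm s m) c := by
  rw [← single_eq_monomial]
  exact Finsupp.sum_single_index (by simp only [map_zero])

lemma theta_Hs (s : ℕ) (p : MvPolynomial (Fin 2) ℂ) : theta (Hs s p) = p := by
  induction p using MvPolynomial.induction_on' with
  | monomial m c => rw [Hs_monomial, theta_monomial, Gm_Fm]
  | add p q hp hq => rw [map_add, theta]; rw [map_add]; rw [← theta, ← theta, hp, hq]

lemma Hs_as_sum (s : ℕ) (p : MvPolynomial (Fin 2) ℂ) :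
    Hs s p = ∑ m ∈ p.support, monomial (Fm s m) (coeff m p) := by
  conv_lhs => rw [← support_sum_monomial_coeff p]
  rw [map_sum]
  exact Finset.sum_congr rfl fun m _ => Hs_monomial s m (coeff m p)

lemma theta_as_sum (q : MvPolynomial (Fin 3) ℂ) :
    theta q = ∑ m ∈ q.support, monomial (Gm m) (coeff m q) := by
  conv_lhs => rw [← support_sum_monomial_coeff q]
  rw [theta, map_sum]
  exact Finset.sum_congr rfl fun m _ => theta_monomial m (coeff m q)

lemma Fm_degree (s : ℕ) (m : Fin 2 →₀ ℕ) (h : m 0 + m 1 ≤ s) :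
    (Fm s m).sum (fun _ e => e) = s := by
  rw [Finsupp.sum_fintype _ _ (fun i => rfl), Fin.sum_univ_three]
  simp; omega

lemma degree_two (m : Fin 2 →₀ ℕ) : m.sum (fun _ e => e) = m 0 + m 1 := by
  rw [Finsupp.sum_fintype _ _ (fun i => rfl), Fin.sum_univ_two]

lemma degree_three (m : Fin 3 →₀ ℕ) : m.sum (fun _ e => e) = m 0 + m 1 + m 2 := by
  rw [Finsupp.sum_fintype _ _ (fun i => rfl), Fin.sum_univ_three]

lemma Hs_isHomogeneous (s : ℕ) (p : MvPolynomial (Fin 2) ℂ) (h : p.totalDegree ≤ s) :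
    (Hs s p).IsHomogeneous s := by
  rw [Hs_as_sum]
  apply IsHomogeneous.sum
  intro m hm
  apply isHomogeneous_monomial
  have hm2 : m 0 + m 1 ≤ s := by
    have := le_totalDegree hm
    rw [degree_two] at this; omega
  show ∑ i ∈ (Fm s m).support, (Fm s m) i = s
  exact Fm_degree s m hm2

lemma totalDegree_theta_le (q : MvPolynomial (Fin 3) ℂ) :
    (theta q).totalDegree ≤ q.totalDegree := by
  rw [theta_as_sum]
  apply totalDegree_finsetSum_le
  intro m hm
  refine (totalDegree_monomial_le _ _).trans ?_
  have h1 : (Gm m).sum (fun _ e => e) ≤ m.sum (fun _ e => e) := by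
    rw [degree_two, degree_three]; simp only [Gm_apply0, Gm_apply1]; omega
  calc (Gm m).degree = (Gm m).sum (fun _ e => e) := rfl
    _ ≤ m.sum (fun _ e => e) := h1
    _ ≤ q.totalDegree := le_totalDegree hm

lemma support_deg3 {n : ℕ} {q : MvPolynomial (Fin 3) ℂ} (hq : q.IsHomogeneous n)
    {m : Fin 3 →₀ ℕ} (hm : m ∈ q.support) : m 0 + m 1 + m 2 = n := by
  have h := hq (mem_support_iff.mp hm)
  change Finsupp.weight (fun _ => 1) m = n at h
  rw [← Finsupp.degree_eq_weight_one] at h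
  rw [← degree_three]
  exact h

lemma theta_inj_homog {n : ℕ} {q : MvPolynomial (Fin 3) ℂ} (hq : q.IsHomogeneous n)
    (h : theta q = 0) : q = 0 := by
  by_contra hne
  obtain ⟨m', hm'⟩ := ne_zero_iff.mp hne
  have hm's : m' ∈ q.support := mem_support_iff.mpr hm'
  have hc : coeff (Gm m') (theta q) = coeff m' q := by
    rw [theta_as_sum, coeff_sum]
    simp only [coeff_monomial]
    rw [Finset.sum_eq_single m']
    · rw [if_pos rfl]
    · intro m hm hne'
      rw [if_neg]
      intro hGm
      apply hne'
      have h1 := support_deg3 hq hm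
      have h2 := support_deg3 hq hm's
      have e0 : m 0 = m' 0 := by rw [← Gm_apply0 m, ← Gm_apply0 m', hGm]
      have e1 : m 1 = m' 1 := by rw [← Gm_apply1 m, ← Gm_apply1 m', hGm]
      ext i
      fin_cases i
      · exact e0
      · exact e1
      · show m 2 = m' 2
        omega
    · intro hns; exact absurd hm's hns
  rw [h, coeff_zero] at hc
  exact hm' hc.symm

lemma Hs_theta {s : ℕ} {q : MvPolynomial (Fin 3) ℂ} (hq : q.IsHomogeneous s) :
    Hs s (theta q) = q := by
  have hdeg : (theta q).totalDegree ≤ s :=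
    (totalDegree_theta_le q).trans hq.totalDegree_le
  have h1 : (Hs s (theta q) - q).IsHomogeneous s :=
    (Hs_isHomogeneous s _ hdeg).sub hq
  have h2 : theta (Hs s (theta q) - q) = 0 := by
    show aeval _ _ = 0
    rw [map_sub, ← theta, ← theta, theta_Hs, sub_self]
  exact sub_eq_zero.mp (theta_inj_homog h1 h2)

lemma theta_add (u v : MvPolynomial (Fin 3) ℂ) : theta (u + v) = theta u + theta v :=
  map_add (aeval ![X 0, X 1, 1]) u v

lemma theta_sum {ι : Type*} (t : Finset ι) (g : ι → MvPolynomial (Fin 3) ℂ) :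
    theta (∑ i ∈ t, g i) = ∑ i ∈ t, theta (g i) :=
  map_sum (aeval ![X 0, X 1, 1]) g t

lemma Gm_sub_single0 (m : Fin 3 →₀ ℕ) :
    Gm (m - Finsupp.single 0 1) = Gm m - Finsupp.single 0 1 := by
  ext i
  fin_cases i <;>
    simp [Finsupp.tsub_apply, Finsupp.single_apply]

lemma Gm_sub_single1 (m : Fin 3 →₀ ℕ) :
    Gm (m - Finsupp.single 1 1) = Gm m - Finsupp.single 1 1 := by
  ext i
  fin_cases i <;>
    simp [Finsupp.tsub_apply, Finsupp.single_apply]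

lemma Gm_sub_single2 (m : Fin 3 →₀ ℕ) :
    Gm (m - Finsupp.single 2 1) = Gm m := by
  ext i
  fin_cases i <;>
    simp [Finsupp.tsub_apply, Finsupp.single_apply]

lemma theta_pderiv0 (f : MvPolynomial (Fin 3) ℂ) :
    theta (pderiv 0 f) = pderiv 0 (theta f) := by
  induction f using MvPolynomial.induction_on' with
  | monomial m c =>
    rw [theta_monomial, pderiv_monomial, pderiv_monomial, theta_monomial,
      Gm_sub_single0, Gm_apply0]
  | add p q hp hq =>
    rw [map_add, theta_add, theta_add, map_add, hp, hq]

lemma theta_pderiv1 (f : MvPolynomial (Fin 3) ℂ) :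
    theta (pderiv 1 f) = pderiv 1 (theta f) := by
  induction f using MvPolynomial.induction_on' with
  | monomial m c =>
    rw [theta_monomial, pderiv_monomial, pderiv_monomial, theta_monomial,
      Gm_sub_single1, Gm_apply1]
  | add p q hp hq =>
    rw [map_add, theta_add, theta_add, map_add, hp, hq]

lemma X_mul_monomial' (j : Fin 2) (k : Fin 2 →₀ ℕ) (c : ℂ) :
    (X j : MvPolynomial (Fin 2) ℂ) * monomial k c = monomial (Finsupp.single j 1 + k) c := by
  rw [X, monomial_mul, one_mul]

lemma single_add_sub {j : Fin 2} {k : Fin 2 →₀ ℕ} (h : k j ≠ 0) :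
    Finsupp.single j 1 + (k - Finsupp.single j 1) = k := by
  ext i
  simp only [Finsupp.add_apply, Finsupp.tsub_apply, Finsupp.single_apply]
  by_cases hi : j = i
  · subst hi; simp; omega
  · simp [hi]

lemma euler_monomial {d : ℕ} (m : Fin 3 →₀ ℕ) (c : ℂ) (hm : m 0 + m 1 + m 2 = d) :
    theta (pderiv 2 (monomial m c)) + X 0 * theta (pderiv 0 (monomial m c))
      + X 1 * theta (pderiv 1 (monomial m c))
      = (d : MvPolynomial (Fin 2) ℂ) * theta (monomial m c) := by
  rw [pderiv_monomial, pderiv_monomial, pderiv_monomial, theta_monomial, theta_monomial,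
    theta_monomial, theta_monomial, Gm_sub_single0, Gm_sub_single1, Gm_sub_single2]
  have hd : (d : MvPolynomial (Fin 2) ℂ) = C (d : ℂ) := by
    simp
  rw [hd, C_mul_monomial]
  have h0 : (X 0 : MvPolynomial (Fin 2) ℂ) * monomial (Gm m - Finsupp.single 0 1) (c * ↑(m 0))
      = monomial (Gm m) (c * m 0) := by
    by_cases h : m 0 = 0
    · simp [h]
    · rw [X_mul_monomial', single_add_sub (by rw [Gm_apply0]; exact h)]
  have h1 : (X 1 : MvPolynomial (Fin 2) ℂ) * monomial (Gm m - Finsupp.single 1 1) (c * ↑(m 1))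
      = monomial (Gm m) (c * m 1) := by
    by_cases h : m 1 = 0
    · simp [h]
    · rw [X_mul_monomial', single_add_sub (by rw [Gm_apply1]; exact h)]
  rw [h0, h1, ← map_add, ← map_add]
  congr 1
  have : (d : ℂ) = (m 0 : ℂ) + m 1 + m 2 := by
    rw [← hm]; push_cast; ring
  rw [this]; ring

lemma euler {d : ℕ} {f : MvPolynomial (Fin 3) ℂ} (hf : f.IsHomogeneous d) :
    theta (pderiv 2 f) + X 0 * theta (pderiv 0 f) + X 1 * theta (pderiv 1 f)
      = (d : MvPolynomial (Fin 2) ℂ) * theta f := by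
  conv_lhs => rw [← support_sum_monomial_coeff f]
  conv_rhs => rw [← support_sum_monomial_coeff f]
  rw [map_sum, map_sum, map_sum, theta_sum, theta_sum, theta_sum, theta_sum]
  rw [Finset.mul_sum, Finset.mul_sum, Finset.mul_sum, ← Finset.sum_add_distrib,
    ← Finset.sum_add_distrib]
  refine Finset.sum_congr rfl fun m hm => ?_
  exact euler_monomial m (coeff m f) (support_deg3 hf hm)

lemma theta_mul (u v : MvPolynomial (Fin 3) ℂ) : theta (u * v) = theta u * theta v :=
  map_mul (aeval ![X 0, X 1, 1]) u v

lemma theta_zero : theta 0 = 0 :=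
  map_zero (aeval ![X 0, X 1, 1])

lemma theta_smul (c : ℂ) (u : MvPolynomial (Fin 3) ℂ) : theta (c • u) = c • theta u :=
  map_smul (aeval ![X 0, X 1, 1] : MvPolynomial (Fin 3) ℂ →ₐ[ℂ] MvPolynomial (Fin 2) ℂ).toLinearMap c u

lemma theta_C (c : ℂ) : theta (C c) = C c := by
  simp [theta, algebraMap_eq]

lemma totalDegree_natCast_mul (d : ℕ) (p : MvPolynomial (Fin 2) ℂ) :
    ((d : MvPolynomial (Fin 2) ℂ) * p).totalDegree ≤ p.totalDegree := by
  rw [← map_natCast (C : ℂ →+* MvPolynomial (Fin 2) ℂ) d]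
  exact (totalDegree_mul _ _).trans (by rw [totalDegree_C]; simp)

lemma degree3' (k : Fin 3 →₀ ℕ) : k.degree = k 0 + k 1 + k 2 := by
  rw [show k.degree = k.sum (fun _ e => e) from rfl, degree_three]

lemma isHomogeneous_pderiv {f : MvPolynomial (Fin 3) ℂ} {d : ℕ} (hf : f.IsHomogeneous d)
    (i : Fin 3) : (pderiv i f).IsHomogeneous (d - 1) := by
  conv_lhs => rw [← support_sum_monomial_coeff f]
  rw [map_sum]
  apply IsHomogeneous.sum
  intro m hm
  rw [pderiv_monomial]
  by_cases h : m i = 0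
  · simp only [h, Nat.cast_zero, mul_zero, map_zero]
    exact isHomogeneous_zero _ _ _
  · apply isHomogeneous_monomial
    have h3 := support_deg3 hf hm
    rw [degree3']
    simp only [Finsupp.tsub_apply, Finsupp.single_apply]
    fin_cases i <;> simp_all <;> omega

section Main

variable (f : MvPolynomial (Fin 3) ℂ) (d s : ℕ)

abbrev R2 := MvPolynomial (Fin 2) ℂ

def phiFun (ρ : MvPolynomial (Fin 3) ℂ × MvPolynomial (Fin 3) ℂ × MvPolynomial (Fin 3) ℂ) :
    R2 × R2 × R2 :=
  (theta ρ.1 - X 0 * theta ρ.2.2, theta ρ.2.1 - X 1 * theta ρ.2.2,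
    (d : R2) * theta ρ.2.2)

def psiFun (ρ : R2 × R2 × R2) :
    MvPolynomial (Fin 3) ℂ × MvPolynomial (Fin 3) ℂ × MvPolynomial (Fin 3) ℂ :=
  (Hs s ((d : ℂ)⁻¹ • (X 0 * ρ.2.2 + (d : R2) * ρ.1)),
   Hs s ((d : ℂ)⁻¹ • (X 1 * ρ.2.2 + (d : R2) * ρ.2.1)),
   Hs s ((d : ℂ)⁻¹ • ρ.2.2))

variable {f d s}

lemma phi_mem (hf : f.IsHomogeneous d) {ρ} (hρ : ρ ∈ ARfs f s) :
    phiFun d ρ ∈ ARgle (theta f) d s := by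
  obtain ⟨hsyz, ha, hb, hc⟩ := hρ
  constructor
  · show (theta ρ.1 - X 0 * theta ρ.2.2) * pderiv 0 (theta f)
      + (theta ρ.2.1 - X 1 * theta ρ.2.2) * pderiv 1 (theta f)
      + (d : R2) * theta ρ.2.2 * theta f = 0
    rw [← theta_pderiv0, ← theta_pderiv1]
    have h1 : theta ρ.1 * theta (pderiv 0 f) + theta ρ.2.1 * theta (pderiv 1 f)
        + theta ρ.2.2 * theta (pderiv 2 f) = 0 := by
      have h := congrArg theta hsyz
      rwa [theta_add, theta_add, theta_mul, theta_mul, theta_mul, theta_zero] at h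
    have h2 := euler hf
    linear_combination h1 - theta ρ.2.2 * h2
  · right
    show max _ (max _ _) ≤ s
    have key : ∀ q : MvPolynomial (Fin 3) ℂ, q.IsHomogeneous s →
        ((d : R2) * theta q).totalDegree ≤ s := fun q hq =>
      (totalDegree_natCast_mul d _).trans ((totalDegree_theta_le q).trans hq.totalDegree_le)
    refine max_le ?_ (max_le ?_ (key _ hc))
    · have e1 : X 0 * ((d : R2) * theta ρ.2.2)
          + (d : R2) * (theta ρ.1 - X 0 * theta ρ.2.2) = (d : R2) * theta ρ.1 := by ring
      rw [show (phiFun d ρ).2.2 = (d : R2) * theta ρ.2.2 from rfl,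
        show (phiFun d ρ).1 = theta ρ.1 - X 0 * theta ρ.2.2 from rfl, e1]
      exact key _ ha
    · have e1 : X 1 * ((d : R2) * theta ρ.2.2)
          + (d : R2) * (theta ρ.2.1 - X 1 * theta ρ.2.2) = (d : R2) * theta ρ.2.1 := by ring
      rw [show (phiFun d ρ).2.2 = (d : R2) * theta ρ.2.2 from rfl,
        show (phiFun d ρ).2.1 = theta ρ.2.1 - X 1 * theta ρ.2.2 from rfl, e1]
      exact key _ hb

lemma psi_mem (hf : f.IsHomogeneous d) (hd : 1 ≤ d) {ρ} (hρ : ρ ∈ ARgle (theta f) d s) :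
    psiFun d s ρ ∈ ARfs f s := by
  obtain ⟨hsyz, hdeg⟩ := hρ
  obtain ⟨A, B, CC⟩ := ρ
  simp only [Prod.ext_iff, Prod.fst_zero, Prod.snd_zero] at hdeg
  have hu : (X 0 * CC + (d : R2) * A).totalDegree ≤ s := by
    rcases hdeg with ⟨h1, h2, h3⟩ | h
    · subst h1; subst h3; simp
    · exact le_trans (le_max_left _ _) h
  have hv : (X 1 * CC + (d : R2) * B).totalDegree ≤ s := by
    rcases hdeg with ⟨h1, h2, h3⟩ | h
    · subst h2; subst h3; simp
    · exact le_trans (le_trans (le_max_left _ _) (le_max_right _ _)) h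
  have hw : CC.totalDegree ≤ s := by
    rcases hdeg with ⟨h1, h2, h3⟩ | h
    · subst h3; simp
    · exact le_trans (le_trans (le_max_right _ _) (le_max_right _ _)) h
  have hA : ((psiFun d s (A, B, CC)).1).IsHomogeneous s :=
    Hs_isHomogeneous s _ ((totalDegree_smul_le _ _).trans hu)
  have hB : ((psiFun d s (A, B, CC)).2.1).IsHomogeneous s :=
    Hs_isHomogeneous s _ ((totalDegree_smul_le _ _).trans hv)
  have hC : ((psiFun d s (A, B, CC)).2.2).IsHomogeneous s :=
    Hs_isHomogeneous s _ ((totalDegree_smul_le _ _).trans hw)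
  refine ⟨?_, hA, hB, hC⟩
  have hP : ((psiFun d s (A, B, CC)).1 * pderiv 0 f + (psiFun d s (A, B, CC)).2.1 * pderiv 1 f
      + (psiFun d s (A, B, CC)).2.2 * pderiv 2 f).IsHomogeneous (s + (d - 1)) :=
    ((hA.mul (isHomogeneous_pderiv hf 0)).add (hB.mul (isHomogeneous_pderiv hf 1))).add
      (hC.mul (isHomogeneous_pderiv hf 2))
  apply theta_inj_homog hP
  rw [theta_add, theta_add, theta_mul, theta_mul, theta_mul]
  simp only [psiFun, theta_Hs]
  have hsyz' : A * theta (pderiv 0 f) + B * theta (pderiv 1 f) + CC * theta f = 0 := by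
    rw [theta_pderiv0, theta_pderiv1]; exact hsyz
  have hQ : (X 0 * CC + (d : R2) * A) * theta (pderiv 0 f)
      + (X 1 * CC + (d : R2) * B) * theta (pderiv 1 f) + CC * theta (pderiv 2 f) = 0 := by
    linear_combination (d : R2) * hsyz' + CC * (euler hf)
  have e1 : ((d:ℂ)⁻¹ • (X 0 * CC + (d : R2) * A)) * theta (pderiv 0 f)
      + ((d:ℂ)⁻¹ • (X 1 * CC + (d : R2) * B)) * theta (pderiv 1 f)
      + ((d:ℂ)⁻¹ • CC) * theta (pderiv 2 f)
      = (d:ℂ)⁻¹ • ((X 0 * CC + (d : R2) * A) * theta (pderiv 0 f)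
        + (X 1 * CC + (d : R2) * B) * theta (pderiv 1 f) + CC * theta (pderiv 2 f)) := by
    simp only [smul_eq_C_mul]; ring
  rw [e1, hQ, smul_zero]

lemma hCC (hd0 : (d : ℂ) ≠ 0) :
    C ((d : ℂ)⁻¹) * C (d : ℂ) = (1 : R2) := by
  rw [← C_mul, inv_mul_cancel₀ hd0, C_1]

lemma inv_smul_natCast_mul (hd0 : (d : ℂ) ≠ 0) (p : R2) :
    (d : ℂ)⁻¹ • ((d : R2) * p) = p := by
  rw [← map_natCast (C : ℂ →+* MvPolynomial (Fin 2) ℂ) d, ← smul_eq_C_mul, smul_smul,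
    inv_mul_cancel₀ hd0, one_smul]

lemma psi_phi (hd0 : (d : ℂ) ≠ 0) {ρ} (hρ : ρ ∈ ARfs f s) :
    psiFun d s (phiFun d ρ) = ρ := by
  obtain ⟨_, ha, hb, hc⟩ := hρ
  have e1 : X 0 * ((d : R2) * theta ρ.2.2) + (d : R2) * (theta ρ.1 - X 0 * theta ρ.2.2)
      = (d : R2) * theta ρ.1 := by ring
  have e2 : X 1 * ((d : R2) * theta ρ.2.2) + (d : R2) * (theta ρ.2.1 - X 1 * theta ρ.2.2)
      = (d : R2) * theta ρ.2.1 := by ring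
  have e3 : (d : ℂ)⁻¹ • ((d : R2) * theta ρ.2.2) = theta ρ.2.2 := inv_smul_natCast_mul hd0 _
  show (_, _, _) = ρ
  rw [show (phiFun d ρ) = (theta ρ.1 - X 0 * theta ρ.2.2, theta ρ.2.1 - X 1 * theta ρ.2.2,
    (d : R2) * theta ρ.2.2) from rfl]
  simp only
  rw [e1, e2, e3, inv_smul_natCast_mul hd0, inv_smul_natCast_mul hd0,
    Hs_theta ha, Hs_theta hb, Hs_theta hc]

lemma phi_psi (hd0 : (d : ℂ) ≠ 0) (ρ : R2 × R2 × R2) :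
    phiFun d (psiFun d s ρ) = ρ := by
  obtain ⟨A, B, CC⟩ := ρ
  have h1 := hCC (d := d) hd0
  show (_, _, _) = (A, B, CC)
  simp only [phiFun, psiFun, theta_Hs]
  refine Prod.ext ?_ (Prod.ext ?_ ?_)
  · show (d:ℂ)⁻¹ • (X 0 * CC + (d : R2) * A) - X 0 * ((d:ℂ)⁻¹ • CC) = A
    rw [smul_eq_C_mul, smul_eq_C_mul, ← map_natCast (C : ℂ →+* MvPolynomial (Fin 2) ℂ) d]
    linear_combination A * h1
  · show (d:ℂ)⁻¹ • (X 1 * CC + (d : R2) * B) - X 1 * ((d:ℂ)⁻¹ • CC) = B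
    rw [smul_eq_C_mul, smul_eq_C_mul, ← map_natCast (C : ℂ →+* MvPolynomial (Fin 2) ℂ) d]
    linear_combination B * h1
  · show (d : R2) * ((d:ℂ)⁻¹ • CC) = CC
    rw [smul_eq_C_mul, ← map_natCast (C : ℂ →+* MvPolynomial (Fin 2) ℂ) d]
    linear_combination CC * h1

end Main

/-- For `f ∈ ℂ[x,y,z]` homogeneous of degree `d ≥ 1` not divisible by `z`,
`g = f(x,y,1)` and any `s`, the map `φ_s : AR(f)_s → AR(g)_{≤s}` induced by
`φ(a,b,c) = (θ(a) − x·θ(c), θ(b) − y·θ(c), d·θ(c))` is an isomorphism of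
`ℂ`-vector spaces. -/
theorem phi_s_linearEquiv (f : MvPolynomial (Fin 3) ℂ) (d : ℕ) (hd : 1 ≤ d)
    (hf : f.IsHomogeneous d) (hz : ¬ (X (2 : Fin 3) ∣ f)) (s : ℕ) :
    ∃ e : ARfs f s ≃ₗ[ℂ] ARgle (theta f) d s,
      ∀ ρ : ARfs f s,
        (e ρ : MvPolynomial (Fin 2) ℂ × MvPolynomial (Fin 2) ℂ × MvPolynomial (Fin 2) ℂ) =
          (theta ρ.1.1 - X 0 * theta ρ.1.2.2,
           theta ρ.1.2.1 - X 1 * theta ρ.1.2.2,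
           (d : MvPolynomial (Fin 2) ℂ) * theta ρ.1.2.2) := by
  have hd0 : (d : ℂ) ≠ 0 := Nat.cast_ne_zero.mpr (by omega)
  refine ⟨⟨⟨⟨fun ρ => ⟨phiFun d ρ.1, phi_mem hf ρ.2⟩, ?_⟩, ?_⟩,
    fun ρ => ⟨psiFun d s ρ.1, psi_mem hf hd ρ.2⟩, ?_, ?_⟩, fun ρ => rfl⟩
  · intro a b
    apply Subtype.ext
    show phiFun d (a.1 + b.1) = phiFun d a.1 + phiFun d b.1
    refine Prod.ext ?_ (Prod.ext ?_ ?_) <;>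
      simp only [phiFun, Prod.fst_add, Prod.snd_add, theta_add] <;> ring
  · intro c a
    apply Subtype.ext
    show phiFun d (c • a.1) = c • phiFun d a.1
    refine Prod.ext ?_ (Prod.ext ?_ ?_) <;>
      simp only [phiFun, Prod.smul_fst, Prod.smul_snd, smul_eq_C_mul, theta_mul, theta_C] <;>
      ring
  · intro a
    apply Subtype.ext
    exact psi_phi hd0 a.2
  · intro b
    apply Subtype.ext
    exact phi_psi hd0 b.1
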